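/- For the perspective function f(x,y) = y²/x (with f(0,0)=0, +∞ elsewhere on the boundary), a pair (Φ,Ψ) is a subgradient of f at the point (0,0) if and only if Φ ≤ -Ψ²/4. -/
import Mathlib


/-- The perspective function `f(x,y) = y²/x` for `x > 0`, with `f(0,0) = 0`
and `+∞` elsewhere. -/
noncomputable def persp : ℝ × ℝ → EReal := fun p =>
  if 0 < p.1 then ((p.2 ^ 2 / p.1 : ℝ) : EReal)
  else if p.1 = 0 ∧ p.2 = 0 then 0 else ⊤

/-- `(Φ,Ψ)` is a subgradient of the perspective function at `(0,0)`
iff `Φ ≤ -Ψ²/4`. -/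
theorem persp_subgradient_at_zero (Φ Ψ : ℝ) :
    (∀ p : ℝ × ℝ, persp (0, 0) + (((Φ * (p.1 - 0) + Ψ * (p.2 - 0) : ℝ)) : EReal) ≤ persp p)
      ↔ Φ ≤ -Ψ ^ 2 / 4 := by
  have h00 : persp (0, 0) = 0 := by simp [persp]
  constructor
  · intro h
    have := h (1, Ψ / 2)
    rw [h00, zero_add] at this
    simp only [persp] at this
    norm_num at this
    have h2 : Φ + Ψ * (Ψ / 2) ≤ (Ψ / 2) ^ 2 := by exact_mod_cast this
    nlinarith
  · intro hΦ p
    rw [h00, zero_add]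
    unfold persp
    split_ifs with h1 h2
    · rw [EReal.coe_le_coe_iff]
      have hx : (0:ℝ) < p.1 := h1
      have key : (p.2 - Ψ * p.1 / 2) ^ 2 / p.1 ≥ 0 := by positivity
      have : p.2 ^ 2 / p.1 - Ψ * p.2 + Ψ ^ 2 * p.1 / 4 = (p.2 - Ψ * p.1 / 2) ^ 2 / p.1 := by
        field_simp; ring
      nlinarith
    · obtain ⟨h2a, h2b⟩ := h2
      rw [h2a, h2b]
      norm_num
    · exact le_top
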